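/- Let P, Q be commuting positive definite real symmetric n×n matrices. Then the limit as β → 1 of tr[(1/(β−1))·(P^β − P·Q^(β−1)) − (1/β)·(P^β − Q^β)] equals tr[P·(log P − log Q) − P + Q] (the von Neumann relative entropy extended to non-equal-trace matrices). -/

import Mathlib

open Filter Topology Matrix

/-- Matrix power of a Hermitian (symmetric) real matrix via spectral decomposition. -/
noncomputable def mpow {m : ℕ} (A : Matrix (Fin m) (Fin m) ℝ) (c : ℝ) :
    Matrix (Fin m) (Fin m) ℝ :=
  if hA : A.IsHermitian then
    (hA.eigenvectorUnitary : Matrix (Fin m) (Fin m) ℝ) *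
      Matrix.diagonal (fun i => hA.eigenvalues i ^ c) *
      star (hA.eigenvectorUnitary : Matrix (Fin m) (Fin m) ℝ)
  else 0

/-- Matrix logarithm of a Hermitian (symmetric) real matrix via spectral decomposition. -/
noncomputable def mlog {m : ℕ} (A : Matrix (Fin m) (Fin m) ℝ) :
    Matrix (Fin m) (Fin m) ℝ :=
  if hA : A.IsHermitian then
    (hA.eigenvectorUnitary : Matrix (Fin m) (Fin m) ℝ) *
      Matrix.diagonal (fun i => Real.log (hA.eigenvalues i)) *
      star (hA.eigenvectorUnitary : Matrix (Fin m) (Fin m) ℝ)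
  else 0

lemma trace_mul_unitary_diag {m : ℕ} (U : Matrix.unitaryGroup (Fin m) ℝ) (d : Fin m → ℝ)
    (B : Matrix (Fin m) (Fin m) ℝ) :
    (B * ((U : Matrix (Fin m) (Fin m) ℝ) * Matrix.diagonal d * star (U : Matrix (Fin m) (Fin m) ℝ))).trace
      = ∑ i, (star (U : Matrix (Fin m) (Fin m) ℝ) * B * (U : Matrix (Fin m) (Fin m) ℝ)) i i * d i := by
  rw [show B * ((U : Matrix (Fin m) (Fin m) ℝ) * Matrix.diagonal d * star (U : Matrix (Fin m) (Fin m) ℝ))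
      = (B * (U : Matrix (Fin m) (Fin m) ℝ) * Matrix.diagonal d) * star (U : Matrix (Fin m) (Fin m) ℝ) by
    simp [mul_assoc]]
  rw [Matrix.trace_mul_comm]
  simp [Matrix.trace, Matrix.diag, Matrix.mul_diagonal, ← mul_assoc, Finset.mul_sum]

lemma trace_unitary_diag {m : ℕ} (U : Matrix.unitaryGroup (Fin m) ℝ) (d : Fin m → ℝ) :
    ((U : Matrix (Fin m) (Fin m) ℝ) * Matrix.diagonal d * star (U : Matrix (Fin m) (Fin m) ℝ)).trace
      = ∑ i, d i := by
  rw [← one_mul ((U : Matrix (Fin m) (Fin m) ℝ) * Matrix.diagonal d *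
      star (U : Matrix (Fin m) (Fin m) ℝ)), trace_mul_unitary_diag]
  simp [U.2.1, Matrix.one_apply]

lemma sum_eig_eq_trace {m : ℕ} {A : Matrix (Fin m) (Fin m) ℝ} (hA : A.IsHermitian) :
    ∑ i, hA.eigenvalues i = A.trace := by
  rw [hA.trace_eq_sum_eigenvalues]
  simp [RCLike.ofReal_real_eq_id]

theorem beta_matrix_divergence_tendsto_vonNeumann {n : ℕ}
    (P Q : Matrix (Fin n) (Fin n) ℝ) (hP : P.PosDef) (hQ : Q.PosDef)
    (hPQ : Commute P Q) :
    Tendsto (fun β : ℝ =>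
        ((1 / (β - 1)) • (mpow P β - P * mpow Q (β - 1)) -
          (1 / β) • (mpow P β - mpow Q β)).trace)
      (𝓝[≠] 1) (𝓝 ((P * (mlog P - mlog Q) - P + Q).trace)) := by
  have hPh := hP.1
  have hQh := hQ.1
  set lam : Fin n → ℝ := hPh.eigenvalues with hlamdef
  set mu : Fin n → ℝ := hQh.eigenvalues with hmudef
  have hlam : ∀ i, 0 < lam i := fun i => hP.eigenvalues_pos i
  have hmu : ∀ i, 0 < mu i := fun i => hQ.eigenvalues_pos i
  set U : Matrix (Fin n) (Fin n) ℝ := (hQh.eigenvectorUnitary : Matrix (Fin n) (Fin n) ℝ) with hUdef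
  set c : Fin n → ℝ := fun j => (star U * P * U) j j with hcdef
  -- trace formulas
  have hmpowP : ∀ β : ℝ, (mpow P β).trace = ∑ i, lam i ^ β := fun β => by
    rw [mpow, dif_pos hPh, trace_unitary_diag]
  have hmpowQ : ∀ β : ℝ, (mpow Q β).trace = ∑ j, mu j ^ β := fun β => by
    rw [mpow, dif_pos hQh, trace_unitary_diag]
  have hPQpow : ∀ γ : ℝ, (P * mpow Q γ).trace = ∑ j, c j * mu j ^ γ := fun γ => by
    rw [mpow, dif_pos hQh, trace_mul_unitary_diag]
  have hPlogQ : (P * mlog Q).trace = ∑ j, c j * Real.log (mu j) := by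
    rw [mlog, dif_pos hQh, trace_mul_unitary_diag]
  have hPlogP : (P * mlog P).trace = ∑ i, lam i * Real.log (lam i) := by
    rw [mlog, dif_pos hPh, trace_mul_unitary_diag]
    refine Finset.sum_congr rfl fun i _ => ?_
    have hd := hPh.conjStarAlgAut_star_eigenvectorUnitary
    rw [Unitary.conjStarAlgAut_star_apply] at hd
    rw [hd]
    simp [RCLike.ofReal_real_eq_id]
    rfl
  have hsum_c : ∑ j, c j = P.trace := by
    have h1 : ∑ j, c j = (star U * P * U).trace := rfl
    rw [h1, Matrix.trace_mul_cycle]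
    have : U * star U = 1 := hQh.eigenvectorUnitary.2.2
    rw [this, one_mul]
  -- the scalar function g
  set g : ℝ → ℝ := fun β => (∑ i, lam i ^ β) - ∑ j, c j * mu j ^ (β - 1) with hgdef
  have hg1 : g 1 = 0 := by
    simp [hgdef, Real.rpow_one, sub_self, Real.rpow_zero, mul_one,
      sum_eig_eq_trace hPh, hsum_c]
    exact sub_eq_zero.mpr (sum_eig_eq_trace hPh)
  have hgderiv : HasDerivAt g
      ((∑ i, lam i * Real.log (lam i)) - ∑ j, c j * Real.log (mu j)) 1 := by
    have h1 : HasDerivAt (fun β : ℝ => ∑ i, lam i ^ β)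
        (∑ i, lam i ^ (1:ℝ) * Real.log (lam i)) 1 :=
      HasDerivAt.fun_sum fun i _ => (Real.hasStrictDerivAt_const_rpow (hlam i) 1).hasDerivAt
    have h2 : HasDerivAt (fun β : ℝ => ∑ j, c j * mu j ^ (β - 1))
        (∑ j, c j * (mu j ^ ((1:ℝ) - 1) * Real.log (mu j) * 1)) 1 := by
      refine HasDerivAt.fun_sum fun j _ => HasDerivAt.const_mul _ ?_
      have hinner : HasDerivAt (fun β : ℝ => β - 1) 1 1 := (hasDerivAt_id 1).sub_const 1
      have houter : HasDerivAt (fun x : ℝ => mu j ^ x)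
          (mu j ^ ((1:ℝ) - 1) * Real.log (mu j)) ((1:ℝ) - 1) :=
        (Real.hasStrictDerivAt_const_rpow (hmu j) _).hasDerivAt
      exact HasDerivAt.comp (h := fun β : ℝ => β - 1) 1 houter hinner
    have h := h1.fun_sub h2
    norm_num [Real.rpow_one, Real.rpow_zero] at h
    convert h using 1
  have hslope := hasDerivAt_iff_tendsto_slope.mp hgderiv
  -- the continuous part
  have hh : Tendsto (fun β : ℝ => (1/β) * ((∑ i, lam i ^ β) - ∑ j, mu j ^ β)) (𝓝 1)
      (𝓝 ((1/(1:ℝ)) * ((∑ i, lam i ^ (1:ℝ)) - ∑ j, mu j ^ (1:ℝ)))) := by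
    apply Tendsto.mul
    · exact (continuousAt_const.div continuousAt_id one_ne_zero)
    · exact Tendsto.sub
        (tendsto_finset_sum _ fun i _ =>
          ((Real.hasStrictDerivAt_const_rpow (hlam i) 1).hasDerivAt.continuousAt))
        (tendsto_finset_sum _ fun j _ =>
          ((Real.hasStrictDerivAt_const_rpow (hmu j) 1).hasDerivAt.continuousAt))
  have hmain := hslope.sub (hh.mono_left nhdsWithin_le_nhds)
  have hval : (P * (mlog P - mlog Q) - P + Q).trace
      = ((∑ i, lam i * Real.log (lam i)) - ∑ j, c j * Real.log (mu j))
        - (1/(1:ℝ)) * ((∑ i, lam i ^ (1:ℝ)) - ∑ j, mu j ^ (1:ℝ)) := by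
    rw [Matrix.trace_add, Matrix.trace_sub, Matrix.mul_sub, Matrix.trace_sub,
      hPlogP, hPlogQ]
    rw [← sum_eig_eq_trace hPh, ← sum_eig_eq_trace hQh]
    simp [Real.rpow_one]
    ring
  rw [hval]
  refine Tendsto.congr (fun β => ?_) hmain
  rw [Matrix.trace_sub, Matrix.trace_smul, Matrix.trace_smul, Matrix.trace_sub,
    Matrix.trace_sub, hmpowP, hmpowQ, hPQpow, smul_eq_mul, smul_eq_mul,
    slope_def_field, hg1, sub_zero, hgdef]
  ring
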